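/- arXiv:1710.04077 — 2 statements merged into one kernel-verified Lean document; each statement's English description precedes it below -/
import Mathlib

section
/- Let S ⊆ ℤ^n be a nonempty integrally convex set. Then the ℓ₁-distance function d⁽¹⁾ : ℤ^n → ℝ defined by d⁽¹⁾(x) = inf { ‖x − y‖₁ : y ∈ S } is an integrally convex function. -/
open scoped BigOperators

noncomputable section

variable {ι : Type*} [Fintype ι]

/-- Embedding of integer vectors into real vectors. -/
def embedZ (z : ι → ℤ) : ι → ℝ := fun i => (z i : ℝ)

/-- The integral neighborhood `N(x)` of a real vector `x`. -/
def IntNbhd (x : ι → ℝ) : Set (ι → ℤ) := {z | ∀ i, |x i - (z i : ℝ)| < 1}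

/-- A set `S ⊆ ℤ^ι` is integrally convex if every point `x` of its convex hull
belongs to the convex hull of `S ∩ N(x)`. -/
def IntegrallyConvexSet (S : Set (ι → ℤ)) : Prop :=
  ∀ x ∈ convexHull ℝ (embedZ '' S), x ∈ convexHull ℝ (embedZ '' (S ∩ IntNbhd x))

/-- The local convex extension `f̃` of `f : ℤ^ι → ℝ ∪ {+∞}`. -/
def LocalConvexExt (f : (ι → ℤ) → EReal) (x : ι → ℝ) : EReal :=
  sInf {v : EReal | ∃ (A : Finset (ι → ℤ)) (lam : (ι → ℤ) → ℝ),
    (∀ z ∈ A, z ∈ IntNbhd x) ∧ (∀ z ∈ A, 0 ≤ lam z) ∧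
    (∑ z ∈ A, lam z) = 1 ∧ (∀ i, (∑ z ∈ A, lam z * (z i : ℝ)) = x i) ∧
    v = ∑ z ∈ A, ((lam z : EReal) * f z)}

/-- A function `f : ℤ^ι → ℝ ∪ {+∞}` is integrally convex if its local convex
extension is a convex function on `ℝ^ι`. -/
def IntegrallyConvexFn (f : (ι → ℤ) → EReal) : Prop :=
  ∀ x y : ι → ℝ, ∀ a b : ℝ, 0 ≤ a → 0 ≤ b → a + b = 1 →
    LocalConvexExt f (a • x + b • y) ≤
      (a : EReal) * LocalConvexExt f x + (b : EReal) * LocalConvexExt f y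

/-- Componentwise rounded-up midpoint `⌈(x+y)/2⌉` of two integer vectors. -/
def midUp (x y : ι → ℤ) : ι → ℤ := fun i => ⌈((x i + y i : ℤ) : ℚ) / 2⌉

/-- Componentwise rounded-down midpoint `⌊(x+y)/2⌋` of two integer vectors. -/
def midDown (x y : ι → ℤ) : ι → ℤ := fun i => ⌊((x i + y i : ℤ) : ℚ) / 2⌋

/-- A set `S ⊆ ℤ^ι` is discrete midpoint convex if for all `x, y ∈ S` with
`‖x - y‖∞ ≥ 2`, both `⌈(x+y)/2⌉` and `⌊(x+y)/2⌋` belong to `S`. -/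
def DiscreteMidpointConvexSet (S : Set (ι → ℤ)) : Prop :=
  ∀ x ∈ S, ∀ y ∈ S, (∃ i, 2 ≤ |x i - y i|) → midUp x y ∈ S ∧ midDown x y ∈ S

/-- Globally discrete midpoint convex function: discrete midpoint convexity for
all pairs with `‖x - y‖∞ ≥ 2`. -/
def GloballyDMC (f : (ι → ℤ) → EReal) : Prop :=
  ∀ x y : ι → ℤ, (∃ i, 2 ≤ |x i - y i|) →
    f (midUp x y) + f (midDown x y) ≤ f x + f y

/-- Locally discrete midpoint convex function: effective domain is a discrete
midpoint convex set, and discrete midpoint convexity holds whenever `‖x - y‖∞ = 2`. -/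
def LocallyDMC (f : (ι → ℤ) → EReal) : Prop :=
  DiscreteMidpointConvexSet {x | f x ≠ ⊤} ∧
  ∀ x y : ι → ℤ, (∀ i, |x i - y i| ≤ 2) → (∃ i, |x i - y i| = 2) →
    f (midUp x y) + f (midDown x y) ≤ f x + f y

/-- An integer interval (box) `B = [a, b] ∩ ℤ^ι` with bounds
`a ∈ (ℤ ∪ {-∞})^ι`, `b ∈ (ℤ ∪ {+∞})^ι`, `a ≤ b`. -/
def IsIntegerInterval (B : Set (ι → ℤ)) : Prop :=
  ∃ a b : ι → EReal,
    (∀ i, a i = ⊥ ∨ ∃ k : ℤ, a i = ((k : ℝ) : EReal)) ∧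
    (∀ i, b i = ⊤ ∨ ∃ k : ℤ, b i = ((k : ℝ) : EReal)) ∧
    (∀ i, a i ≤ b i) ∧
    B = {x | ∀ i, a i ≤ ((x i : ℝ) : EReal) ∧ ((x i : ℝ) : EReal) ≤ b i}

/-- Separable convex function: a sum of univariate discrete convex functions. -/
def SeparableConvex (φ : (ι → ℤ) → EReal) : Prop :=
  ∃ φi : ι → ℤ → EReal,
    (∀ i t, φi i t ≠ ⊥) ∧
    (∀ i t, 2 * φi i t ≤ φi i (t - 1) + φi i (t + 1)) ∧
    (∀ x, φ x = ∑ i, φi i (x i))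

namespace IC16

open Set

lemma coe_sInf_image {A : Set ℝ} (hA : A.Nonempty) (hb : BddBelow A) :
    sInf (Real.toEReal '' A) = ((sInf A : ℝ) : EReal) := by
  apply le_antisymm
  · by_contra h
    push_neg at h
    obtain ⟨y, hy1, hy2⟩ := EReal.exists_between_coe_real h
    obtain ⟨a, haA, ha⟩ := exists_lt_of_csInf_lt hA (by exact_mod_cast hy1)
    have h1 : sInf (Real.toEReal '' A) ≤ (a : EReal) := sInf_le ⟨a, haA, rfl⟩
    have h2 : (a : EReal) < (y : ℝ) := by exact_mod_cast ha
    exact absurd (h1.trans_lt h2) (not_lt.2 hy2.le)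
  · exact le_sInf (by rintro v ⟨r, hr, rfl⟩; exact EReal.coe_le_coe_iff.2 (csInf_le hb hr))

variable {ι : Type*} [Fintype ι]

/-- real valued l1 distance to S -/
def dR (S : Set (ι → ℤ)) (z : ι → ℤ) : ℝ :=
  sInf {r : ℝ | ∃ y ∈ S, r = ((∑ i, |z i - y i| : ℤ) : ℝ)}

lemma dRset_nonempty {S : Set (ι → ℤ)} (hne : S.Nonempty) (z : ι → ℤ) :
    {r : ℝ | ∃ y ∈ S, r = ((∑ i, |z i - y i| : ℤ) : ℝ)}.Nonempty := by
  obtain ⟨y, hy⟩ := hne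
  exact ⟨_, y, hy, rfl⟩

lemma dRset_bdd {S : Set (ι → ℤ)} (z : ι → ℤ) :
    BddBelow {r : ℝ | ∃ y ∈ S, r = ((∑ i, |z i - y i| : ℤ) : ℝ)} := by
  refine ⟨0, ?_⟩
  rintro r ⟨y, hy, rfl⟩
  positivity

lemma dR_nonneg {S : Set (ι → ℤ)} (hne : S.Nonempty) (z : ι → ℤ) : 0 ≤ dR S z :=
  le_csInf (dRset_nonempty hne z) (by rintro r ⟨y, hy, rfl⟩; positivity)

lemma dR_le {S : Set (ι → ℤ)} {y : ι → ℤ} (hy : y ∈ S) (z : ι → ℤ) :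
    dR S z ≤ ((∑ i, |z i - y i| : ℤ) : ℝ) :=
  csInf_le (dRset_bdd z) ⟨y, hy, rfl⟩

lemma dR_mem_eq_zero {S : Set (ι → ℤ)} (hne : S.Nonempty) {z : ι → ℤ} (hz : z ∈ S) :
    dR S z = 0 := by
  refine le_antisymm ?_ (dR_nonneg hne z)
  simpa using dR_le hz z

lemma d_eq_dR {S : Set (ι → ℤ)} (hne : S.Nonempty) (d : (ι → ℤ) → EReal)
    (hd : ∀ x, d x = sInf {v : EReal |
      ∃ y ∈ S, v = (((∑ i, |x i - y i| : ℤ) : ℝ) : EReal)}) (z : ι → ℤ) :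
    d z = ((dR S z : ℝ) : EReal) := by
  rw [hd]
  have : {v : EReal | ∃ y ∈ S, v = (((∑ i, |z i - y i| : ℤ) : ℝ) : EReal)}
      = Real.toEReal '' {r : ℝ | ∃ y ∈ S, r = ((∑ i, |z i - y i| : ℤ) : ℝ)} := by
    ext v
    constructor
    · rintro ⟨y, hy, rfl⟩; exact ⟨_, ⟨y, hy, rfl⟩, rfl⟩
    · rintro ⟨r, ⟨y, hy, rfl⟩, rfl⟩; exact ⟨y, hy, rfl⟩
  rw [this, coe_sInf_image (dRset_nonempty hne z) (dRset_bdd z)]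
  rfl

/-- dR is 1-Lipschitz under a single coordinate update. -/
lemma dR_update_le [DecidableEq ι] {S : Set (ι → ℤ)} (hne : S.Nonempty) (z : ι → ℤ) (i : ι)
    (v : ℤ) : dR S (Function.update z i v) ≤ dR S z + |(v : ℝ) - (z i : ℝ)| := by
  rw [← sub_le_iff_le_add]
  refine le_csInf (dRset_nonempty hne z) ?_
  rintro r ⟨y, hy, rfl⟩
  rw [sub_le_iff_le_add]
  have key : ((∑ j, |Function.update z i v j - y j| : ℤ) : ℝ)
      ≤ ((∑ j, |z j - y j| : ℤ) : ℝ) + |(v : ℝ) - (z i : ℝ)| := by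
    have h1 : ∑ j, |Function.update z i v j - y j|
        = |v - y i| + ∑ j ∈ Finset.univ.erase i, |z j - y j| := by
      rw [← Finset.add_sum_erase _ _ (Finset.mem_univ i)]
      congr 1
      · rw [Function.update_self]
      · refine Finset.sum_congr rfl fun j hj => ?_
        rw [Function.update_of_ne (Finset.ne_of_mem_erase hj)]
    have h2 : (∑ j, |z j - y j| : ℤ)
        = |z i - y i| + ∑ j ∈ Finset.univ.erase i, |z j - y j| :=
      (Finset.add_sum_erase _ _ (Finset.mem_univ i)).symm
    have h3 : |v - y i| ≤ |z i - y i| + |v - z i| := by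
      calc |v - y i| = |(z i - y i) + (v - z i)| := by ring_nf
        _ ≤ |z i - y i| + |v - z i| := abs_add_le _ _
    have h4 : |(v : ℝ) - (z i : ℝ)| = ((|v - z i| : ℤ) : ℝ) := by push_cast; ring_nf
    have hZ : (∑ j, |Function.update z i v j - y j|) ≤ (∑ j, |z j - y j|) + |v - z i| := by
      rw [h1, h2]; linarith [h3]
    rw [h4]
    exact_mod_cast hZ
  calc dR S (Function.update z i v) ≤ _ := dR_le hy _
    _ ≤ _ := key

end IC16
namespace IC16

variable {ι : Type*} [Fintype ι]

def mass (L : List ((ι → ℤ) × ℝ)) : ℝ := (L.map Prod.snd).sum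

def bary (L : List ((ι → ℤ) × ℝ)) (i : ι) : ℝ := (L.map fun e => e.2 * (e.1 i : ℝ)).sum

def cost (f : (ι → ℤ) → ℝ) (L : List ((ι → ℤ) × ℝ)) : ℝ := (L.map fun e => e.2 * f e.1).sum

/-- The choice of splitting parameters for one coordinate step. -/
lemma theta_exists {a c : ℤ} {s t : ℝ} (hs0 : 0 ≤ s) (hs1 : s < 1) (ht0 : 0 ≤ t) (ht1 : t < 1) :
    ∃ θa θb : ℝ, 0 ≤ θa ∧ θa ≤ 1 ∧ 0 ≤ θb ∧ θb ≤ 1 ∧ (1 - s) * θa + s * θb = t ∧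
      (1 - s) * ((1 - θa) * |(c : ℝ) - a| + θa * |(c : ℝ) + 1 - a|)
        + s * ((1 - θb) * |(c : ℝ) - a - 1| + θb * |(c : ℝ) - a|)
        ≤ |((c : ℝ) + t) - ((a : ℝ) + s)| ∧
      (0 < t ∨ (θa = 0 ∧ θb = 0)) := by
  rcases lt_trichotomy c a with hca | hca | hca
  · -- c < a : both thetas are t
    refine ⟨t, t, ht0, ht1.le, ht0, ht1.le, by ring, ?_, ?_⟩
    · have h1 : |(c : ℝ) - a| = (a : ℝ) - c := by
        rw [abs_of_nonpos (by exact_mod_cast sub_nonpos.2 (Int.cast_le.2 hca.le : (c:ℝ) ≤ a))]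
        ring
      have hca' : (c : ℝ) + 1 ≤ a := by exact_mod_cast hca
      have h2 : |(c : ℝ) + 1 - a| = (a : ℝ) - c - 1 := by
        rw [abs_of_nonpos (by linarith)]; ring
      have h3 : |(c : ℝ) - a - 1| = (a : ℝ) - c + 1 := by
        rw [abs_of_nonpos (by linarith)]; ring
      have h4 : |((c : ℝ) + t) - ((a : ℝ) + s)| = (a : ℝ) + s - c - t := by
        rw [abs_of_nonpos (by linarith)]; ring
      rw [h1, h2, h3, h4]; ring_nf; nlinarith [hs0, hs1, ht0, ht1]
    · rcases ht0.lt_or_eq with h | h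
      · exact Or.inl h
      · exact Or.inr ⟨h.symm, h.symm⟩
  · -- c = a
    subst hca
    have h0 : |(c : ℝ) - c| = 0 := by simp
    have h1 : |(c : ℝ) + 1 - c| = 1 := by simp
    have h2 : |(c : ℝ) - c - 1| = 1 := by
      rw [show (c : ℝ) - c - 1 = -1 by ring]; simp
    have habs : |((c : ℝ) + t) - ((c : ℝ) + s)| = |t - s| := by ring_nf
    rcases le_or_gt s t with hst | hst
    · rcases hs0.lt_or_eq with hs | hs
      · -- 0 < s ≤ t : θa = (t-s)/(1-s), θb = 1
        have h1s : (0:ℝ) < 1 - s := by linarith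
        refine ⟨(t - s)/(1 - s), 1, div_nonneg (by linarith) h1s.le,
          (div_le_one h1s).2 (by linarith), zero_le_one, le_refl 1, ?_, ?_, Or.inl (by linarith)⟩
        · field_simp; ring
        · rw [h0, h1, h2, habs, abs_of_nonneg (by linarith)]
          field_simp; linarith
      · -- s = 0 ≤ t : θa = t, θb = 0
        refine ⟨t, 0, ht0, ht1.le, le_refl 0, zero_le_one, by rw [← hs]; ring, ?_, ?_⟩
        · rw [h0, h1, h2, habs, ← hs, abs_of_nonneg (by linarith)]
          ring_nf
          nlinarith
        · rcases ht0.lt_or_eq with h | h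
          · exact Or.inl h
          · exact Or.inr ⟨h.symm, rfl⟩
    · -- t < s : θa = 0, θb = t/s
      have hs : 0 < s := lt_of_le_of_lt ht0 hst
      refine ⟨0, t/s, le_refl 0, zero_le_one, div_nonneg ht0 hs.le,
        (div_le_one hs).2 hst.le, by field_simp; ring, ?_, ?_⟩
      · rw [h0, h1, h2, habs, abs_of_nonpos (by linarith)]
        field_simp; linarith
      · rcases ht0.lt_or_eq with h | h
        · exact Or.inl h
        · refine Or.inr ⟨rfl, by rw [← h]; simp⟩
  · -- a < c : both thetas are t
    refine ⟨t, t, ht0, ht1.le, ht0, ht1.le, by ring, ?_, ?_⟩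
    · have hca' : (a : ℝ) + 1 ≤ c := by exact_mod_cast hca
      have h1 : |(c : ℝ) - a| = (c : ℝ) - a := by rw [abs_of_nonneg (by linarith)]
      have h2 : |(c : ℝ) + 1 - a| = (c : ℝ) - a + 1 := by
        rw [abs_of_nonneg (by linarith)]; ring
      have h3 : |(c : ℝ) - a - 1| = (c : ℝ) - a - 1 := by
        rw [abs_of_nonneg (by linarith)]
      have h4 : |((c : ℝ) + t) - ((a : ℝ) + s)| = (c : ℝ) + t - a - s := by
        rw [abs_of_nonneg (by linarith)]; ring
      rw [h1, h2, h3, h4]; nlinarith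
    · rcases ht0.lt_or_eq with h | h
      · exact Or.inl h
      · exact Or.inr ⟨h.symm, h.symm⟩

end IC16
namespace IC16

variable {ι : Type*} [Fintype ι]

lemma sum_map_affine (L : List ((ι → ℤ) × ℝ)) (i : ι) (α β : ℝ) :
    (L.map fun e => e.2 * (α + β * (e.1 i : ℝ))).sum = α * mass L + β * bary L i := by
  have : (L.map fun e => e.2 * (α + β * (e.1 i : ℝ))).sum
      = (L.map fun e => α * e.2 + β * (e.2 * (e.1 i : ℝ))).sum := by
    congr 1; apply List.map_congr_left; intro e _; ring
  rw [this, List.sum_map_add, List.sum_map_mul_left, List.sum_map_mul_left]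
  rfl

set_option maxHeartbeats 1000000 in
lemma step_lemma [DecidableEq ι] (f : (ι → ℤ) → ℝ)
    (hLip : ∀ (z : ι → ℤ) (i : ι) (v : ℤ),
      f (Function.update z i v) ≤ f z + |(v : ℝ) - (z i : ℝ)|)
    (L : List ((ι → ℤ) × ℝ)) (i : ι) (pi xi : ℝ)
    (hw : ∀ e ∈ L, 0 ≤ e.2)
    (hsupp : ∀ e ∈ L, e.2 ≠ 0 → |pi - (e.1 i : ℝ)| < 1)
    (hmass : mass L = 1) (hmean : bary L i = pi) :
    ∃ L' : List ((ι → ℤ) × ℝ),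
      (∀ e ∈ L', 0 ≤ e.2) ∧ mass L' = 1 ∧ bary L' i = xi ∧
      (∀ j, j ≠ i → bary L' j = bary L j) ∧
      (∀ e' ∈ L', e'.2 ≠ 0 → |xi - (e'.1 i : ℝ)| < 1 ∧
        ∃ e ∈ L, e.2 ≠ 0 ∧ ∀ j, j ≠ i → e'.1 j = e.1 j) ∧
      cost f L' ≤ cost f L + |xi - pi| := by
  set a : ℤ := ⌊pi⌋ with ha
  set c : ℤ := ⌊xi⌋ with hc
  set s : ℝ := pi - a with hs
  set t : ℝ := xi - c with ht
  have hs0 : 0 ≤ s := sub_nonneg.2 (Int.floor_le pi)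
  have hs1 : s < 1 := by have := Int.lt_floor_add_one pi; rw [hs]; linarith
  have ht0 : 0 ≤ t := sub_nonneg.2 (Int.floor_le xi)
  have ht1 : t < 1 := by have := Int.lt_floor_add_one xi; rw [ht]; linarith
  obtain ⟨θa, θb, hθa0, hθa1, hθb0, hθb1, hmeanθ, hcostθ, hposθ⟩ :=
    theta_exists (a := a) (c := c) hs0 hs1 ht0 ht1
  -- the interpolated θ function
  set θ : ℤ → ℝ := fun v => θa + ((v : ℝ) - (a : ℝ)) * (θb - θa) with hθ
  have hθa : θ a = θa := by
    show θa + (((a : ℤ) : ℝ) - (a : ℝ)) * (θb - θa) = θa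
    ring
  have hθb : θ (a + 1) = θb := by
    show θa + ((((a + 1 : ℤ)) : ℝ) - (a : ℝ)) * (θb - θa) = θb
    push_cast; ring
  -- support values
  have hsuppval : ∀ e ∈ L, e.2 ≠ 0 → e.1 i = a ∨ e.1 i = a + 1 := by
    intro e he hz
    have h := abs_lt.1 (hsupp e he hz)
    have hfl : (a : ℝ) ≤ pi := Int.floor_le pi
    have hfu : pi < (a : ℝ) + 1 := Int.lt_floor_add_one pi
    have h1 : ((a : ℝ) - 1) < (e.1 i : ℝ) := by linarith
    have h2 : ((e.1 i : ℝ)) < (a : ℝ) + 2 := by linarith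
    have h1' : a - 1 < e.1 i := by exact_mod_cast h1
    have h2' : e.1 i < a + 2 := by exact_mod_cast h2
    omega
  have hθmem : ∀ e ∈ L, e.2 ≠ 0 → (θ (e.1 i) = θa ∨ θ (e.1 i) = θb) := by
    intro e he hz
    rcases hsuppval e he hz with h | h <;> rw [h]
    · exact Or.inl hθa
    · exact Or.inr hθb
  have hθ01 : ∀ e ∈ L, e.2 ≠ 0 → 0 ≤ θ (e.1 i) ∧ θ (e.1 i) ≤ 1 := by
    intro e he hz
    rcases hθmem e he hz with h | h <;> rw [h] <;> exact ⟨by assumption, by assumption⟩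
  classical
  refine ⟨(L.map fun e => (Function.update e.1 i c, e.2 * (1 - θ (e.1 i))))
      ++ (L.map fun e => (Function.update e.1 i (c + 1), e.2 * θ (e.1 i))), ?_, ?_, ?_, ?_, ?_, ?_⟩
  · -- nonneg weights
    intro e' he'
    rcases List.mem_append.1 he' with h | h <;> obtain ⟨e, he, rfl⟩ := List.mem_map.1 h
    · rcases eq_or_ne e.2 0 with h0 | h0
      · simp [h0]
      · exact mul_nonneg (hw e he) (by linarith [(hθ01 e he h0).2])
    · rcases eq_or_ne e.2 0 with h0 | h0
      · simp [h0]
      · exact mul_nonneg (hw e he) (hθ01 e he h0).1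
  · -- mass
    show mass _ = 1
    rw [mass, List.map_append, List.sum_append, List.map_map, List.map_map]
    have : ((L.map fun e => e.2 * (1 - θ (e.1 i))).sum + (L.map fun e => e.2 * θ (e.1 i)).sum)
        = (L.map Prod.snd).sum := by
      rw [← List.sum_map_add]
      congr 1; apply List.map_congr_left; intro e _; ring
    calc _ = (L.map fun e => e.2 * (1 - θ (e.1 i))).sum + (L.map fun e => e.2 * θ (e.1 i)).sum := rfl
      _ = (L.map Prod.snd).sum := this
      _ = 1 := hmass
  · -- bary i
    show bary _ i = xi
    rw [bary, List.map_append, List.sum_append, List.map_map, List.map_map]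
    have key : ((L.map fun e => (e.2 * (1 - θ (e.1 i))) * ((Function.update e.1 i c) i : ℝ)).sum
        + (L.map fun e => (e.2 * θ (e.1 i)) * ((Function.update e.1 i (c+1)) i : ℝ)).sum)
        = (L.map fun e => e.2 * (((c : ℝ) + θa - (a:ℝ) * (θb - θa)) + (θb - θa) * (e.1 i : ℝ))).sum := by
      rw [← List.sum_map_add]
      congr 1
      apply List.map_congr_left
      intro e _
      rw [Function.update_self, Function.update_self]
      push_cast
      simp only [hθ]
      ring
    calc _ = _ := key
      _ = ((c : ℝ) + θa - (a:ℝ) * (θb - θa)) * mass L + (θb - θa) * bary L i :=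
          sum_map_affine L i _ _
      _ = xi := by rw [hmass, hmean]; have : pi = (a:ℝ) + s := by rw [hs]; ring
                   have hxi : xi = (c:ℝ) + t := by rw [ht]; ring
                   rw [this, hxi]; linarith [hmeanθ]
  · -- bary j for j ≠ i
    intro j hj
    show bary _ j = bary L j
    rw [bary, List.map_append, List.sum_append, List.map_map, List.map_map]
    have : ((L.map fun e => (e.2 * (1 - θ (e.1 i))) * ((Function.update e.1 i c) j : ℝ)).sum
        + (L.map fun e => (e.2 * θ (e.1 i)) * ((Function.update e.1 i (c+1)) j : ℝ)).sum)
        = (L.map fun e => e.2 * (e.1 j : ℝ)).sum := by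
      rw [← List.sum_map_add]
      congr 1
      apply List.map_congr_left
      intro e _
      rw [Function.update_of_ne hj, Function.update_of_ne hj]
      ring
    exact this
  · -- support and provenance
    intro e' he' hz'
    rcases List.mem_append.1 he' with h | h <;> obtain ⟨e, he, heq⟩ := List.mem_map.1 h
    · have h2 : e.2 ≠ 0 := by
        intro h0; apply hz'; rw [← heq]; simp [h0]
      constructor
      · rw [← heq]
        simp only [Function.update_self]
        rw [abs_lt]
        exact ⟨by linarith, by linarith⟩
      · exact ⟨e, he, h2, fun j hj => by rw [← heq]; exact Function.update_of_ne hj _ _⟩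
    · have h2 : e.2 ≠ 0 := by
        intro h0; apply hz'; rw [← heq]; simp [h0]
      have hθz : θ (e.1 i) ≠ 0 := by
        intro h0; apply hz'; rw [← heq]; simp [h0]
      have htpos : 0 < t := by
        rcases hposθ with h | ⟨h1, h2'⟩
        · exact h
        · exfalso; apply hθz
          rcases hθmem e he h2 with h | h <;> rw [h] <;> assumption
      constructor
      · rw [← heq]
        simp only [Function.update_self]
        push_cast
        rw [abs_lt]
        exact ⟨by linarith, by linarith⟩
      · exact ⟨e, he, h2, fun j hj => by rw [← heq]; exact Function.update_of_ne hj _ _⟩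
  · -- cost
    show cost f _ ≤ _
    rw [cost, List.map_append, List.sum_append, List.map_map, List.map_map]
    set ga : ℝ := (1 - θa) * |(c : ℝ) - a| + θa * |(c : ℝ) + 1 - a| with hga
    set gb : ℝ := (1 - θb) * |(c : ℝ) - a - 1| + θb * |(c : ℝ) - a| with hgb
    have key : ((L.map fun e => (e.2 * (1 - θ (e.1 i))) * f (Function.update e.1 i c)).sum
        + (L.map fun e => (e.2 * θ (e.1 i)) * f (Function.update e.1 i (c+1))).sum)
        ≤ (L.map fun e => e.2 * (f e.1 + (ga - (a:ℝ)*(gb - ga)) + (gb - ga) * (e.1 i : ℝ))).sum := by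
      rw [← List.sum_map_add]
      apply List.sum_le_sum
      intro e he
      rcases eq_or_ne e.2 0 with h0 | h0
      · simp [h0]
      · have hwnn := hw e he
        have hl1 := hLip e.1 i c
        have hl2 := hLip e.1 i (c + 1)
        obtain ⟨hth0, hth1⟩ := hθ01 e he h0
        rcases hsuppval e he h0 with hv | hv
        · -- e.1 i = a
          have hthv : θ (e.1 i) = θa := by rw [hv, hθa]
          have hGv : (ga - (a:ℝ)*(gb - ga)) + (gb - ga) * (e.1 i : ℝ) = ga := by
            rw [hv]; push_cast; ring
          rw [hthv]
          have hb1 : f (Function.update e.1 i c) ≤ f e.1 + |(c:ℝ) - (a:ℝ)| := by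
            have := hl1; rwa [hv] at this
          have hb2 : f (Function.update e.1 i (c+1)) ≤ f e.1 + |(c:ℝ) + 1 - (a:ℝ)| := by
            have := hl2; rw [hv] at this; convert this using 3; push_cast; ring
          have expand : e.2 * (f e.1 + (ga - (a:ℝ)*(gb - ga)) + (gb - ga) * (e.1 i : ℝ))
              = e.2 * (f e.1 + ga) := by
            rw [show (f e.1 + (ga - (a:ℝ)*(gb - ga)) + (gb - ga) * (e.1 i : ℝ))
              = f e.1 + ((ga - (a:ℝ)*(gb - ga)) + (gb - ga) * (e.1 i : ℝ)) by ring, hGv]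
          have m1 : (e.2 * (1 - θa)) * f (Function.update e.1 i c)
              ≤ (e.2 * (1 - θa)) * (f e.1 + |(c:ℝ) - (a:ℝ)|) :=
            mul_le_mul_of_nonneg_left hb1 (mul_nonneg hwnn (by linarith))
          have m2 : (e.2 * θa) * f (Function.update e.1 i (c+1))
              ≤ (e.2 * θa) * (f e.1 + |(c:ℝ) + 1 - (a:ℝ)|) :=
            mul_le_mul_of_nonneg_left hb2 (mul_nonneg hwnn hθa0)
          rw [expand, hga]
          nlinarith [m1, m2]
        · -- e.1 i = a + 1
          have hthv : θ (e.1 i) = θb := by rw [hv, hθb]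
          have hGv : (ga - (a:ℝ)*(gb - ga)) + (gb - ga) * (e.1 i : ℝ) = gb := by
            rw [hv]; push_cast; ring
          rw [hthv]
          have hb1 : f (Function.update e.1 i c) ≤ f e.1 + |(c:ℝ) - (a:ℝ) - 1| := by
            have := hl1; rw [hv] at this; convert this using 3; push_cast; ring
          have hb2 : f (Function.update e.1 i (c+1)) ≤ f e.1 + |(c:ℝ) - (a:ℝ)| := by
            have := hl2; rw [hv] at this; convert this using 3; push_cast; ring
          have expand : e.2 * (f e.1 + (ga - (a:ℝ)*(gb - ga)) + (gb - ga) * (e.1 i : ℝ))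
              = e.2 * (f e.1 + gb) := by
            rw [show (f e.1 + (ga - (a:ℝ)*(gb - ga)) + (gb - ga) * (e.1 i : ℝ))
              = f e.1 + ((ga - (a:ℝ)*(gb - ga)) + (gb - ga) * (e.1 i : ℝ)) by ring, hGv]
          have m1 : (e.2 * (1 - θb)) * f (Function.update e.1 i c)
              ≤ (e.2 * (1 - θb)) * (f e.1 + |(c:ℝ) - (a:ℝ) - 1|) :=
            mul_le_mul_of_nonneg_left hb1 (mul_nonneg hwnn (by linarith))
          have m2 : (e.2 * θb) * f (Function.update e.1 i (c+1))
              ≤ (e.2 * θb) * (f e.1 + |(c:ℝ) - (a:ℝ)|) :=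
            mul_le_mul_of_nonneg_left hb2 (mul_nonneg hwnn hθb0)
          rw [expand, hgb]
          nlinarith [m1, m2]
    have split : (L.map fun e => e.2 * (f e.1 + (ga - (a:ℝ)*(gb - ga)) + (gb - ga) * (e.1 i : ℝ))).sum
        = cost f L + ((ga - (a:ℝ)*(gb - ga)) * mass L + (gb - ga) * bary L i) := by
      rw [cost, ← sum_map_affine L i (ga - (a:ℝ)*(gb - ga)) (gb - ga), ← List.sum_map_add]
      congr 1
      apply List.map_congr_left
      intro e _
      ring
    have hfinal : (ga - (a:ℝ)*(gb - ga)) * mass L + (gb - ga) * bary L i ≤ |xi - pi| := by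
      rw [hmass, hmean]
      have hpa : pi = (a:ℝ) + s := by rw [hs]; ring
      have hxc : xi = (c:ℝ) + t := by rw [ht]; ring
      have : (ga - (a:ℝ)*(gb - ga)) * 1 + (gb - ga) * pi = (1 - s) * ga + s * gb := by
        rw [hpa]; ring
      rw [this, hpa, hxc]
      exact hcostθ
    calc _ ≤ _ := key
      _ = cost f L + ((ga - (a:ℝ)*(gb - ga)) * mass L + (gb - ga) * bary L i) := split
      _ ≤ cost f L + |xi - pi| := by linarith

end IC16
namespace IC16

variable {ι : Type*} [Fintype ι]

lemma multi_step [DecidableEq ι] (f : (ι → ℤ) → ℝ)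
    (hLip : ∀ (z : ι → ℤ) (i : ι) (v : ℤ),
      f (Function.update z i v) ≤ f z + |(v : ℝ) - (z i : ℝ)|)
    (x p : ι → ℝ) :
    ∀ (li : List ι), li.Nodup → ∀ (L : List ((ι → ℤ) × ℝ)),
    (∀ e ∈ L, 0 ≤ e.2) → mass L = 1 →
    (∀ i ∈ li, bary L i = p i) →
    (∀ i, i ∉ li → bary L i = x i) →
    (∀ e ∈ L, e.2 ≠ 0 → ∀ i ∈ li, |p i - (e.1 i : ℝ)| < 1) →
    (∀ e ∈ L, e.2 ≠ 0 → ∀ i, i ∉ li → |x i - (e.1 i : ℝ)| < 1) →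
    ∃ L' : List ((ι → ℤ) × ℝ),
      (∀ e ∈ L', 0 ≤ e.2) ∧ mass L' = 1 ∧ (∀ i, bary L' i = x i) ∧
      (∀ e ∈ L', e.2 ≠ 0 → ∀ i, |x i - (e.1 i : ℝ)| < 1) ∧
      cost f L' ≤ cost f L + (li.map fun i => |x i - p i|).sum := by
  intro li
  induction li with
  | nil =>
    intro _ L hw hm hbp hbx _ hx
    exact ⟨L, hw, hm, fun i => hbx i List.not_mem_nil, fun e he hz i => hx e he hz i
      List.not_mem_nil, by simp⟩
  | cons i li ih =>
    intro hnd L hw hm hbp hbx hp hx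
    have hind : i ∉ li := (List.nodup_cons.1 hnd).1
    obtain ⟨L1, hw1, hm1, hbi1, hbj1, hprov1, hcost1⟩ :=
      step_lemma f hLip L i (p i) (x i) hw
        (fun e he hz => hp e he hz i List.mem_cons_self)
        hm (hbp i List.mem_cons_self)
    obtain ⟨L', hw', hm', hb', hsupp', hcost'⟩ := ih (List.nodup_cons.1 hnd).2 L1 hw1 hm1
      (fun j hj => by
        rw [hbj1 j (by rintro rfl; exact hind hj)]
        exact hbp j (List.mem_cons_of_mem i hj))
      (fun j hj => by
        rcases eq_or_ne j i with rfl | hne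
        · exact hbi1
        · rw [hbj1 j hne]
          exact hbx j (by simp [hne, hj]))
      (fun e' he' hz' j hj => by
        obtain ⟨_, e, he, hez, hagree⟩ := hprov1 e' he' hz'
        rw [hagree j (by rintro rfl; exact hind hj)]
        exact hp e he hez j (List.mem_cons_of_mem i hj))
      (fun e' he' hz' j hj => by
        rcases eq_or_ne j i with rfl | hne
        · exact (hprov1 e' he' hz').1
        · obtain ⟨_, e, he, hez, hagree⟩ := hprov1 e' he' hz'
          rw [hagree j hne]
          exact hx e he hez j (by simp [hne, hj]))
    refine ⟨L', hw', hm', hb', hsupp', ?_⟩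
    calc cost f L' ≤ cost f L1 + (li.map fun j => |x j - p j|).sum := hcost'
      _ ≤ cost f L + |x i - p i| + (li.map fun j => |x j - p j|).sum := by linarith
      _ = cost f L + ((i :: li).map fun j => |x j - p j|).sum := by
          rw [List.map_cons, List.sum_cons]; ring

end IC16
namespace IC16

variable {ι : Type*} [Fintype ι]

open Classical in
noncomputable def lamOf (L : List ((ι → ℤ) × ℝ)) (z : ι → ℤ) : ℝ :=
  (L.map fun e => if e.1 = z then e.2 else 0).sum

lemma lamOf_nonneg {L : List ((ι → ℤ) × ℝ)} (hw : ∀ e ∈ L, 0 ≤ e.2) (z : ι → ℤ) :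
    0 ≤ lamOf L z := by
  apply List.sum_nonneg
  intro r hr
  obtain ⟨e, he, rfl⟩ := List.mem_map.1 hr
  split_ifs
  · exact hw e he
  · exact le_refl 0

lemma lamOf_ne_zero {L : List ((ι → ℤ) × ℝ)} {z : ι → ℤ} (h : lamOf L z ≠ 0) :
    ∃ e ∈ L, e.1 = z ∧ e.2 ≠ 0 := by
  by_contra hc
  push_neg at hc
  apply h
  apply List.sum_eq_zero
  intro r hr
  obtain ⟨e, he, rfl⟩ := List.mem_map.1 hr
  split_ifs with hez
  · exact hc e he hez
  · rfl

lemma sum_lamOf_mul (L : List ((ι → ℤ) × ℝ)) (B : Finset (ι → ℤ))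
    (hB : ∀ e ∈ L, e.1 ∈ B) (F : (ι → ℤ) → ℝ) :
    ∑ z ∈ B, lamOf L z * F z = (L.map fun e => e.2 * F e.1).sum := by
  classical
  induction L with
  | nil => simp [lamOf]
  | cons e L ih =>
    have hstep : ∀ z, lamOf (e :: L) z = (if e.1 = z then e.2 else 0) + lamOf L z := by
      intro z; simp [lamOf]
    have : ∑ z ∈ B, lamOf (e :: L) z * F z
        = ∑ z ∈ B, ((if e.1 = z then e.2 * F z else 0) + lamOf L z * F z) := by
      apply Finset.sum_congr rfl
      intro z _
      rw [hstep]
      split_ifs <;> ring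
    rw [this, Finset.sum_add_distrib, Finset.sum_ite_eq B e.1 (fun z => e.2 * F z),
      if_pos (hB e (List.mem_cons_self)), ih (fun e' he' => hB e' (List.mem_cons_of_mem e he'))]
    simp

def coeHomER : ℝ →+ EReal := ⟨⟨Real.toEReal, EReal.coe_zero⟩, EReal.coe_add⟩

lemma lce_le_of_mem_hull [DecidableEq ι] {S : Set (ι → ℤ)} (hne : S.Nonempty)
    (hS : IntegrallyConvexSet S) (d : (ι → ℤ) → EReal)
    (hd : ∀ z, d z = sInf {v : EReal |
      ∃ y ∈ S, v = (((∑ i, |z i - y i| : ℤ) : ℝ) : EReal)})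
    {p : ι → ℝ} (hp : p ∈ convexHull ℝ (embedZ '' S)) (x : ι → ℝ) :
    LocalConvexExt d x ≤ (((∑ i, |x i - p i|) : ℝ) : EReal) := by
  classical
  have hp2 := hS p hp
  rw [mem_convexHull_iff_exists_fintype] at hp2
  obtain ⟨κ, hκ, w, g, hw0, hw1, hg, hgp⟩ := hp2
  choose Y hYS hYg using hg
  set L0 : List ((ι → ℤ) × ℝ) := (Finset.univ : Finset κ).toList.map (fun k => (Y k, w k))
    with hL0
  have hw0' : ∀ e ∈ L0, 0 ≤ e.2 := by
    intro e he
    obtain ⟨k, _, rfl⟩ := List.mem_map.1 he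
    exact hw0 k
  have hmass0 : mass L0 = 1 := by
    rw [mass, hL0, List.map_map]
    rw [show ((fun e : (ι → ℤ) × ℝ => e.2) ∘ fun k => (Y k, w k)) = w from rfl]
    rw [Finset.sum_map_toList]
    exact hw1
  have hbary0 : ∀ i, bary L0 i = p i := by
    intro i
    rw [bary, hL0, List.map_map]
    rw [show ((fun e : (ι → ℤ) × ℝ => e.2 * ((e.1 i : ℤ) : ℝ)) ∘ fun k => (Y k, w k))
      = fun k => w k * ((Y k i : ℤ) : ℝ) from rfl]
    rw [Finset.sum_map_toList]
    have := congrFun hgp i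
    rw [Finset.sum_apply] at this
    rw [← this]
    apply Finset.sum_congr rfl
    intro k _
    have : g k i = ((Y k i : ℤ) : ℝ) := by rw [← hYg k]; rfl
    rw [Pi.smul_apply, smul_eq_mul, this]
  have hsupp0 : ∀ e ∈ L0, e.2 ≠ 0 → ∀ i, |p i - ((e.1 i : ℤ) : ℝ)| < 1 := by
    intro e he _ i
    obtain ⟨k, _, rfl⟩ := List.mem_map.1 he
    exact (hYS k).2 i
  have hcost0 : cost (dR S) L0 = 0 := by
    rw [cost]
    apply List.sum_eq_zero
    intro r hr
    obtain ⟨e, he, rfl⟩ := List.mem_map.1 hr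
    obtain ⟨k, _, rfl⟩ := List.mem_map.1 he
    simp [dR_mem_eq_zero hne (hYS k).1]
  obtain ⟨L', hw', hm', hb', hsupp', hcost'⟩ :=
    multi_step (dR S) (fun z i v => dR_update_le hne z i v) x p
      (Finset.univ : Finset ι).toList (Finset.univ.nodup_toList) L0 hw0' hmass0
      (fun i _ => hbary0 i)
      (fun i hi => absurd (by simp [Finset.mem_toList]) hi)
      (fun e he hz i _ => hsupp0 e he hz i)
      (fun e he hz i hi => absurd (by simp [Finset.mem_toList]) hi)
  have hcostbd : cost (dR S) L' ≤ ∑ i, |x i - p i| := by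
    rw [← Finset.sum_map_toList]
    calc cost (dR S) L' ≤ _ := hcost'
      _ = ((Finset.univ : Finset ι).toList.map fun i => |x i - p i|).sum := by rw [hcost0]; ring
  -- now build the finite convex combination
  set B : Finset (ι → ℤ) := (L'.map Prod.fst).toFinset with hB
  have hBmem : ∀ e ∈ L', e.1 ∈ B := by
    intro e he
    rw [hB, List.mem_toFinset]
    exact List.mem_map_of_mem he
  set A : Finset (ι → ℤ) := B.filter (fun z => lamOf L' z ≠ 0) with hA
  have hsumA : ∀ F : (ι → ℤ) → ℝ, ∑ z ∈ A, lamOf L' z * F z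
      = (L'.map fun e => e.2 * F e.1).sum := by
    intro F
    rw [hA, Finset.sum_filter_of_ne (fun z _ h => left_ne_zero_of_mul h),
      sum_lamOf_mul L' B hBmem]
  have hmem : ∀ z ∈ A, z ∈ IntNbhd x := by
    intro z hz
    rw [hA, Finset.mem_filter] at hz
    obtain ⟨e, he, rfl, hez⟩ := lamOf_ne_zero hz.2
    exact fun i => hsupp' e he hez i
  have hsum1 : ∑ z ∈ A, lamOf L' z = 1 := by
    have := hsumA (fun _ => 1)
    simp only [mul_one] at this
    rw [this, ← mass, hm']
  have hsumx : ∀ i, ∑ z ∈ A, lamOf L' z * ((z i : ℤ) : ℝ) = x i := by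
    intro i
    rw [hsumA (fun z => ((z i : ℤ) : ℝ)), ← bary, hb' i]
  have hv : (∑ z ∈ A, ((lamOf L' z : ℝ) : EReal) * d z)
      = ((cost (dR S) L' : ℝ) : EReal) := by
    have h1 : ∀ z ∈ A, ((lamOf L' z : ℝ) : EReal) * d z
        = (((lamOf L' z * dR S z : ℝ) : ℝ) : EReal) := by
      intro z _
      rw [d_eq_dR hne d hd z, ← EReal.coe_mul]
    rw [Finset.sum_congr rfl h1]
    rw [show (fun z => (((lamOf L' z * dR S z : ℝ) : ℝ) : EReal)) = fun z => coeHomER (lamOf L' z * dR S z) from rfl]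
    rw [← map_sum coeHomER _ A]
    have : ∑ z ∈ A, lamOf L' z * dR S z = cost (dR S) L' := hsumA (dR S)
    rw [this]
    rfl
  have hstep1 : LocalConvexExt d x ≤ ∑ z ∈ A, ((lamOf L' z : ℝ) : EReal) * d z := by
    apply sInf_le
    exact ⟨A, lamOf L', hmem, fun z _ => lamOf_nonneg hw' z, hsum1, hsumx, rfl⟩
  calc LocalConvexExt d x ≤ _ := hstep1
    _ = ((cost (dR S) L' : ℝ) : EReal) := hv
    _ ≤ _ := EReal.coe_le_coe_iff.2 hcostbd

end IC16
namespace IC16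

variable {ι : Type*} [Fintype ι]

def Efn (S : Set (ι → ℤ)) (x : ι → ℝ) : ℝ :=
  sInf {r : ℝ | ∃ q ∈ convexHull ℝ (embedZ '' S), r = ∑ i, |x i - q i|}

lemma Eset_nonempty {S : Set (ι → ℤ)} (hne : S.Nonempty) (x : ι → ℝ) :
    {r : ℝ | ∃ q ∈ convexHull ℝ (embedZ '' S), r = ∑ i, |x i - q i|}.Nonempty := by
  obtain ⟨y, hy⟩ := hne
  exact ⟨_, embedZ y, subset_convexHull ℝ _ ⟨y, hy, rfl⟩, rfl⟩

lemma Eset_bdd {S : Set (ι → ℤ)} (x : ι → ℝ) :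
    BddBelow {r : ℝ | ∃ q ∈ convexHull ℝ (embedZ '' S), r = ∑ i, |x i - q i|} := by
  refine ⟨0, ?_⟩
  rintro r ⟨q, hq, rfl⟩
  positivity

lemma Efn_le {S : Set (ι → ℤ)} {q : ι → ℝ} (hq : q ∈ convexHull ℝ (embedZ '' S)) (x : ι → ℝ) :
    Efn S x ≤ ∑ i, |x i - q i| :=
  csInf_le (Eset_bdd x) ⟨q, hq, rfl⟩

lemma Efn_convexOn {S : Set (ι → ℤ)} (hne : S.Nonempty) :
    ConvexOn ℝ Set.univ (Efn S) := by
  refine ⟨convex_univ, ?_⟩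
  intro x _ y _ a b ha hb hab
  simp only [smul_eq_mul]
  refine le_of_forall_pos_le_add ?_
  intro ε hε
  obtain ⟨r1, ⟨p, hp, rfl⟩, hr1⟩ := exists_lt_of_csInf_lt (Eset_nonempty hne x)
    (lt_add_of_pos_right (Efn S x) hε)
  obtain ⟨r2, ⟨q, hq, rfl⟩, hr2⟩ := exists_lt_of_csInf_lt (Eset_nonempty hne y)
    (lt_add_of_pos_right (Efn S y) hε)
  have hmem : a • p + b • q ∈ convexHull ℝ (embedZ '' S) :=
    (convex_convexHull ℝ _) hp hq ha hb hab
  have hle : Efn S (a • x + b • y) ≤ ∑ i, |(a • x + b • y) i - (a • p + b • q) i| :=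
    Efn_le hmem _
  have hbound : ∑ i, |(a • x + b • y) i - (a • p + b • q) i|
      ≤ a * (∑ i, |x i - p i|) + b * (∑ i, |y i - q i|) := by
    rw [Finset.mul_sum, Finset.mul_sum, ← Finset.sum_add_distrib]
    apply Finset.sum_le_sum
    intro i _
    have : (a • x + b • y) i - (a • p + b • q) i = a * (x i - p i) + b * (y i - q i) := by
      simp [Pi.add_apply, Pi.smul_apply, smul_eq_mul]; ring
    rw [this]
    calc |a * (x i - p i) + b * (y i - q i)| ≤ |a * (x i - p i)| + |b * (y i - q i)| :=
          abs_add_le _ _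
      _ = a * |x i - p i| + b * |y i - q i| := by
          rw [abs_mul, abs_mul, abs_of_nonneg ha, abs_of_nonneg hb]
  have : a * (∑ i, |x i - p i|) + b * (∑ i, |y i - q i|)
      ≤ a * (Efn S x + ε) + b * (Efn S y + ε) := by
    apply add_le_add
    · exact mul_le_mul_of_nonneg_left hr1.le ha
    · exact mul_le_mul_of_nonneg_left hr2.le hb
  calc Efn S (a • x + b • y) ≤ _ := hle
    _ ≤ _ := hbound
    _ ≤ a * (Efn S x + ε) + b * (Efn S y + ε) := this
    _ = a * Efn S x + b * Efn S y + ε := by rw [show a * (Efn S x + ε) + b * (Efn S y + ε)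
          = a * Efn S x + b * Efn S y + (a + b) * ε by ring, hab, one_mul]

lemma Efn_le_dR {S : Set (ι → ℤ)} (hne : S.Nonempty) (z : ι → ℤ) :
    Efn S (embedZ z) ≤ dR S z := by
  refine le_csInf (dRset_nonempty hne z) ?_
  rintro r ⟨y, hy, rfl⟩
  have := Efn_le (subset_convexHull ℝ _ ⟨y, hy, rfl⟩ :
    embedZ y ∈ convexHull ℝ (embedZ '' S)) (embedZ z)
  calc Efn S (embedZ z) ≤ ∑ i, |embedZ z i - embedZ y i| := this
    _ = ((∑ i, |z i - y i| : ℤ) : ℝ) := by push_cast [embedZ]; rfl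

lemma coe_Efn_le_lce {S : Set (ι → ℤ)} (hne : S.Nonempty) (d : (ι → ℤ) → EReal)
    (hd : ∀ z, d z = sInf {v : EReal |
      ∃ y ∈ S, v = (((∑ i, |z i - y i| : ℤ) : ℝ) : EReal)}) (x : ι → ℝ) :
    ((Efn S x : ℝ) : EReal) ≤ LocalConvexExt d x := by
  apply le_sInf
  rintro v ⟨A, lam, hmem, h0, h1, hx, rfl⟩
  have hv : (∑ z ∈ A, ((lam z : ℝ) : EReal) * d z)
      = ((∑ z ∈ A, lam z * dR S z : ℝ) : EReal) := by
    have h1' : ∀ z ∈ A, ((lam z : ℝ) : EReal) * d z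
        = coeHomER (lam z * dR S z) := by
      intro z _
      rw [d_eq_dR hne d hd z, ← EReal.coe_mul]
      rfl
    rw [Finset.sum_congr rfl h1', ← map_sum coeHomER _ A]
    rfl
  rw [hv, EReal.coe_le_coe_iff]
  have hxsum : ∑ z ∈ A, lam z • embedZ z = x := by
    funext i
    rw [Finset.sum_apply]
    have : ∀ z ∈ A, (lam z • embedZ z) i = lam z * ((z i : ℤ) : ℝ) := by
      intro z _; rfl
    rw [Finset.sum_congr rfl this]
    exact hx i
  have hjensen : Efn S x ≤ ∑ z ∈ A, lam z * Efn S (embedZ z) := by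
    rw [← hxsum]
    have := (Efn_convexOn hne (S := S)).map_sum_le h0 h1 (fun z _ => Set.mem_univ (embedZ z))
    simpa using this
  calc Efn S x ≤ ∑ z ∈ A, lam z * Efn S (embedZ z) := hjensen
    _ ≤ ∑ z ∈ A, lam z * dR S z := by
        apply Finset.sum_le_sum
        intro z hz
        exact mul_le_mul_of_nonneg_left (Efn_le_dR hne z) (h0 z hz)

lemma lce_le_coe_Efn [DecidableEq ι] {S : Set (ι → ℤ)} (hne : S.Nonempty)
    (hS : IntegrallyConvexSet S) (d : (ι → ℤ) → EReal)
    (hd : ∀ z, d z = sInf {v : EReal |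
      ∃ y ∈ S, v = (((∑ i, |z i - y i| : ℤ) : ℝ) : EReal)}) (x : ι → ℝ) :
    LocalConvexExt d x ≤ ((Efn S x : ℝ) : EReal) := by
  rcases eq_or_ne (LocalConvexExt d x) ⊥ with hbot | hbot
  · rw [hbot]; exact bot_le
  have hub : ∀ ε : ℝ, 0 < ε → LocalConvexExt d x ≤ ((Efn S x + ε : ℝ) : EReal) := by
    intro ε hε
    obtain ⟨r, ⟨q, hq, rfl⟩, hr⟩ := exists_lt_of_csInf_lt (Eset_nonempty hne x)
      (lt_add_of_pos_right (Efn S x) hε)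
    calc LocalConvexExt d x ≤ _ := lce_le_of_mem_hull hne hS d hd hq x
      _ ≤ _ := EReal.coe_le_coe_iff.2 hr.le
  have htop : LocalConvexExt d x ≠ ⊤ := by
    intro h
    have := hub 1 one_pos
    rw [h] at this
    exact absurd (top_le_iff.1 this) (EReal.coe_ne_top _)
  have heq : LocalConvexExt d x = (((LocalConvexExt d x).toReal : ℝ) : EReal) :=
    (EReal.coe_toReal htop hbot).symm
  rw [heq]
  apply EReal.coe_le_coe_iff.2
  apply le_of_forall_pos_le_add
  intro ε hε
  have := hub ε hε
  rw [heq] at this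
  exact EReal.coe_le_coe_iff.1 this

end IC16


/-- The ℓ₁-distance to a nonempty integrally convex set is an
integrally convex function. -/
theorem l1_distance_integrally_convex (n : ℕ)
    (S : Set (Fin n → ℤ)) (hne : S.Nonempty) (hS : IntegrallyConvexSet S)
    (d : (Fin n → ℤ) → EReal)
    (hd : ∀ x, d x = sInf {v : EReal |
      ∃ y ∈ S, v = (((∑ i, |x i - y i| : ℤ) : ℝ) : EReal)}) :
    IntegrallyConvexFn d := by
  intro x y a b ha hb hab
  have hub := IC16.lce_le_coe_Efn hne hS d hd (a • x + b • y)
  have hconv : IC16.Efn S (a • x + b • y) ≤ a * IC16.Efn S x + b * IC16.Efn S y := by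
    have := (IC16.Efn_convexOn hne (S := S)).2 (Set.mem_univ x) (Set.mem_univ y) ha hb hab
    simpa using this
  have hlbx := IC16.coe_Efn_le_lce hne d hd x
  have hlby := IC16.coe_Efn_le_lce hne d hd y
  calc LocalConvexExt d (a • x + b • y) ≤ ((IC16.Efn S (a • x + b • y) : ℝ) : EReal) := hub
    _ ≤ ((a * IC16.Efn S x + b * IC16.Efn S y : ℝ) : EReal) := EReal.coe_le_coe_iff.2 hconv
    _ = (a : EReal) * ((IC16.Efn S x : ℝ) : EReal) + (b : EReal) * ((IC16.Efn S y : ℝ) : EReal) := by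
        rw [EReal.coe_add, EReal.coe_mul, EReal.coe_mul]
    _ ≤ (a : EReal) * LocalConvexExt d x + (b : EReal) * LocalConvexExt d y := by
        apply add_le_add
        · exact mul_le_mul_of_nonneg_left hlbx (by exact_mod_cast ha)
        · exact mul_le_mul_of_nonneg_left hlby (by exact_mod_cast hb)
end
end

section
/- The sets D₁ = {(0,0,0), (0,1,1), (1,1,0), (1,2,1)} and D₂ = {(0,0,0), (0,1,0), (1,1,1), (1,2,1)} in ℤ³ are both integrally convex, but their intersection D₁ ∩ D₂ = {(0,0,0), (1,2,1)} is not an integrally convex set. Consequently, the sum of the indicator functions δ_{D₁} + δ_{D₂} is a sum of two integrally convex functions that is not integrally convex. -/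
open scoped BigOperators

noncomputable section

variable {ι : Type*} [Fintype ι]

namespace ICAux

abbrev V3 := Fin 3 → ℤ
abbrev W3 := Fin 3 → ℝ

/-- Witness predicate: x is a convex combination of points of S all lying in N(x). -/
def Wit (S : Set V3) (x : W3) : Prop :=
  ∃ (A : Finset V3) (lam : V3 → ℝ),
    (∀ z ∈ A, z ∈ S) ∧ (∀ z ∈ A, z ∈ IntNbhd x) ∧ (∀ z ∈ A, 0 ≤ lam z) ∧
    (∑ z ∈ A, lam z) = 1 ∧ (∀ i, (∑ z ∈ A, lam z * (z i : ℝ)) = x i)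

lemma witness3 (S : Set V3) (q0 q1 q2 : V3) (h01 : q0 ≠ q1) (h02 : q0 ≠ q2) (h12 : q1 ≠ q2)
    (w0 w1 w2 : ℝ) (hw0 : 0 ≤ w0) (hw1 : 0 ≤ w1) (hw2 : 0 ≤ w2) (hsum : w0 + w1 + w2 = 1)
    (x : W3) (hx : ∀ i, w0 * q0 i + w1 * q1 i + w2 * q2 i = x i)
    (hn0 : w0 ≠ 0 → q0 ∈ S ∩ IntNbhd x) (hn1 : w1 ≠ 0 → q1 ∈ S ∩ IntNbhd x)
    (hn2 : w2 ≠ 0 → q2 ∈ S ∩ IntNbhd x) : Wit (S ∩ IntNbhd x) x := by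
  classical
  set lam : V3 → ℝ := fun z => if z = q0 then w0 else if z = q1 then w1 else if z = q2 then w2 else 0 with hlam
  have l0 : lam q0 = w0 := by simp [hlam]
  have l1 : lam q1 = w1 := by
    simp [hlam, Ne.symm h01]
  have l2 : lam q2 = w2 := by
    simp [hlam, Ne.symm h02, Ne.symm h12]
  have hnotmem0 : q0 ∉ ({q1, q2} : Finset V3) := by simp [h01, h02]
  have hnotmem1 : q1 ∉ ({q2} : Finset V3) := by simp [h12]
  have hsum3 : ∀ g : V3 → ℝ, ∑ z ∈ ({q0, q1, q2} : Finset V3), g z = g q0 + g q1 + g q2 := by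
    intro g
    rw [show ({q0, q1, q2} : Finset V3) = insert q0 (insert q1 {q2}) from rfl,
      Finset.sum_insert hnotmem0, Finset.sum_insert hnotmem1, Finset.sum_singleton]
    ring
  refine ⟨({q0, q1, q2} : Finset V3).filter (fun z => lam z ≠ 0), lam, ?_, ?_, ?_, ?_, ?_⟩
  · intro z hz
    rw [Finset.mem_filter] at hz
    obtain ⟨hzA, hlz⟩ := hz
    simp only [Finset.mem_insert, Finset.mem_singleton] at hzA
    rcases hzA with rfl | rfl | rfl
    · exact hn0 (by rwa [l0] at hlz)
    · exact hn1 (by rwa [l1] at hlz)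
    · exact hn2 (by rwa [l2] at hlz)
  · intro z hz
    rw [Finset.mem_filter] at hz
    obtain ⟨hzA, hlz⟩ := hz
    simp only [Finset.mem_insert, Finset.mem_singleton] at hzA
    rcases hzA with rfl | rfl | rfl
    · exact (hn0 (by rwa [l0] at hlz)).2
    · exact (hn1 (by rwa [l1] at hlz)).2
    · exact (hn2 (by rwa [l2] at hlz)).2
  · intro z hz
    rw [Finset.mem_filter] at hz
    obtain ⟨hzA, _⟩ := hz
    simp only [Finset.mem_insert, Finset.mem_singleton] at hzA
    rcases hzA with rfl | rfl | rfl
    · rw [l0]; exact hw0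
    · rw [l1]; exact hw1
    · rw [l2]; exact hw2
  · rw [Finset.sum_filter_ne_zero, hsum3, l0, l1, l2]; exact hsum
  · intro i
    rw [Finset.sum_filter_of_ne (fun z _ h => by
      intro hl; exact h (by rw [hl, zero_mul])), hsum3, l0, l1, l2]
    exact hx i

lemma wit_of_rep {S : Set V3} {x : W3} (A : Finset V3) (lam : V3 → ℝ)
    (hN : ∀ z ∈ A, z ∈ IntNbhd x) (h0 : ∀ z ∈ A, 0 ≤ lam z) (h1 : (∑ z ∈ A, lam z) = 1)
    (hx : ∀ i, (∑ z ∈ A, lam z * (z i : ℝ)) = x i) (hS : ∀ z ∈ A, lam z ≠ 0 → z ∈ S) :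
    Wit S x := by
  classical
  refine ⟨A.filter (fun z => lam z ≠ 0), lam, ?_, ?_, ?_, ?_, ?_⟩
  · intro z hz; rw [Finset.mem_filter] at hz; exact hS z hz.1 hz.2
  · intro z hz; rw [Finset.mem_filter] at hz; exact hN z hz.1
  · intro z hz; rw [Finset.mem_filter] at hz; exact h0 z hz.1
  · rw [Finset.sum_filter_ne_zero]; exact h1
  · intro i
    rw [Finset.sum_filter_of_ne (fun z _ h => by
      intro hl; exact h (by rw [hl, zero_mul]))]
    exact hx i

lemma mem_hull_of_wit {T : Set V3} {x : W3} (h : Wit T x) :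
    x ∈ convexHull ℝ (embedZ '' T) := by
  obtain ⟨A, lam, hS, _, h0, h1, hx⟩ := h
  have hx' : x = A.centerMass lam embedZ := by
    rw [Finset.centerMass, h1, inv_one, one_smul]
    funext i
    rw [Finset.sum_apply]
    simp only [Pi.smul_apply, smul_eq_mul, embedZ]
    exact (hx i).symm
  rw [hx']
  exact Finset.centerMass_mem_convexHull A h0 (by rw [h1]; norm_num)
    (fun z hz => ⟨z, hS z hz, rfl⟩)

lemma lce_nonneg (f : V3 → EReal) (hf : ∀ z, 0 ≤ f z) (x : W3) :
    0 ≤ LocalConvexExt f x := by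
  refine le_sInf ?_
  rintro v ⟨A, lam, -, h0, -, -, rfl⟩
  exact Finset.sum_nonneg fun z hz =>
    mul_nonneg (by exact_mod_cast h0 z hz) (hf z)

lemma lce_le_zero (f : V3 → EReal) {S : Set V3} (hfS : ∀ z ∈ S, f z = 0) {x : W3}
    (h : Wit S x) : LocalConvexExt f x ≤ 0 := by
  obtain ⟨A, lam, hS, hN, h0, h1, hx⟩ := h
  refine sInf_le ⟨A, lam, hN, h0, h1, hx, ?_⟩
  exact (Finset.sum_eq_zero fun z hz => by rw [hfS z (hS z hz), mul_zero]).symm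

lemma rep_of_lce_lt_top (f : V3 → EReal) (hf : ∀ z, 0 ≤ f z) {x : W3}
    (h : LocalConvexExt f x ≠ ⊤) :
    ∃ (A : Finset V3) (lam : V3 → ℝ),
      (∀ z ∈ A, z ∈ IntNbhd x) ∧ (∀ z ∈ A, 0 ≤ lam z) ∧
      (∑ z ∈ A, lam z) = 1 ∧ (∀ i, (∑ z ∈ A, lam z * (z i : ℝ)) = x i) ∧
      (∀ z ∈ A, lam z ≠ 0 → f z ≠ ⊤) := by
  have hlt : LocalConvexExt f x < ⊤ := lt_top_iff_ne_top.2 h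
  rw [LocalConvexExt, sInf_lt_iff] at hlt
  obtain ⟨v, ⟨A, lam, hN, h0, h1, hx, rfl⟩, hv⟩ := hlt
  refine ⟨A, lam, hN, h0, h1, hx, ?_⟩
  intro z hz hlz hfz
  have hterm : ((lam z : EReal) * f z) = ⊤ := by
    rw [hfz]
    exact EReal.mul_top_of_pos (EReal.coe_pos.2 (lt_of_le_of_ne (h0 z hz) (Ne.symm hlz)))
  have hle : ((lam z : EReal) * f z) ≤ ∑ w ∈ A, ((lam w : EReal) * f w) :=
    Finset.single_le_sum (f := fun z => ((lam z : EReal) * f z))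
      (fun w hw => mul_nonneg (by exact_mod_cast h0 w hw) (hf w)) hz
  rw [hterm] at hle
  exact absurd (top_le_iff.1 hle) hv.ne


def D1 : Set V3 := {![0,0,0], ![0,1,1], ![1,1,0], ![1,2,1]}
def D2 : Set V3 := {![0,0,0], ![0,1,0], ![1,1,1], ![1,2,1]}

def P1 : Set W3 := {x | ∃ s t : ℝ, 0 ≤ s ∧ s ≤ 1 ∧ 0 ≤ t ∧ t ≤ 1 ∧
  x 0 = t ∧ x 1 = s + t ∧ x 2 = s}
def P2 : Set W3 := {x | ∃ s t : ℝ, 0 ≤ s ∧ s ≤ 1 ∧ 0 ≤ t ∧ t ≤ 1 ∧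
  x 0 = t ∧ x 1 = s + t ∧ x 2 = t}

lemma convex_P1 : Convex ℝ P1 := by
  intro x hx y hy a b ha hb hab
  obtain ⟨s1, t1, hs10, hs11, ht10, ht11, e10, e11, e12⟩ := hx
  obtain ⟨s2, t2, hs20, hs21, ht20, ht21, e20, e21, e22⟩ := hy
  refine ⟨a * s1 + b * s2, a * t1 + b * t2, ?_, ?_, ?_, ?_, ?_, ?_, ?_⟩
  · positivity
  · nlinarith
  · positivity
  · nlinarith
  · simp only [Pi.add_apply, Pi.smul_apply, smul_eq_mul]; rw [e10, e20]
  · simp only [Pi.add_apply, Pi.smul_apply, smul_eq_mul]; rw [e11, e21]; ring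
  · simp only [Pi.add_apply, Pi.smul_apply, smul_eq_mul]; rw [e12, e22]

lemma convex_P2 : Convex ℝ P2 := by
  intro x hx y hy a b ha hb hab
  obtain ⟨s1, t1, hs10, hs11, ht10, ht11, e10, e11, e12⟩ := hx
  obtain ⟨s2, t2, hs20, hs21, ht20, ht21, e20, e21, e22⟩ := hy
  refine ⟨a * s1 + b * s2, a * t1 + b * t2, ?_, ?_, ?_, ?_, ?_, ?_, ?_⟩
  · positivity
  · nlinarith
  · positivity
  · nlinarith
  · simp only [Pi.add_apply, Pi.smul_apply, smul_eq_mul]; rw [e10, e20]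
  · simp only [Pi.add_apply, Pi.smul_apply, smul_eq_mul]; rw [e11, e21]; ring
  · simp only [Pi.add_apply, Pi.smul_apply, smul_eq_mul]; rw [e12, e22]

lemma hullD1_subset : convexHull ℝ (embedZ '' D1) ⊆ P1 := by
  apply convexHull_min ?_ convex_P1
  rintro _ ⟨z, hz, rfl⟩
  simp only [D1, Set.mem_insert_iff, Set.mem_singleton_iff] at hz
  rcases hz with rfl | rfl | rfl | rfl
  · exact ⟨0, 0, by norm_num, by norm_num, by norm_num, by norm_num,
      by norm_num [embedZ], by norm_num [embedZ], by norm_num [embedZ]; rfl⟩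
  · exact ⟨1, 0, by norm_num, by norm_num, by norm_num, by norm_num,
      by norm_num [embedZ], by norm_num [embedZ], by norm_num [embedZ]; rfl⟩
  · exact ⟨0, 1, by norm_num, by norm_num, by norm_num, by norm_num,
      by norm_num [embedZ], by norm_num [embedZ], by norm_num [embedZ]; rfl⟩
  · exact ⟨1, 1, by norm_num, by norm_num, by norm_num, by norm_num,
      by norm_num [embedZ], by norm_num [embedZ], by norm_num [embedZ]; rfl⟩

lemma hullD2_subset : convexHull ℝ (embedZ '' D2) ⊆ P2 := by
  apply convexHull_min ?_ convex_P2
  rintro _ ⟨z, hz, rfl⟩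
  simp only [D2, Set.mem_insert_iff, Set.mem_singleton_iff] at hz
  rcases hz with rfl | rfl | rfl | rfl
  · exact ⟨0, 0, by norm_num, by norm_num, by norm_num, by norm_num,
      by norm_num [embedZ], by norm_num [embedZ], by norm_num [embedZ]; rfl⟩
  · exact ⟨1, 0, by norm_num, by norm_num, by norm_num, by norm_num,
      by norm_num [embedZ], by norm_num [embedZ], by norm_num [embedZ]; rfl⟩
  · exact ⟨0, 1, by norm_num, by norm_num, by norm_num, by norm_num,
      by norm_num [embedZ], by norm_num [embedZ], by norm_num [embedZ]; rfl⟩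
  · exact ⟨1, 1, by norm_num, by norm_num, by norm_num, by norm_num,
      by norm_num [embedZ], by norm_num [embedZ], by norm_num [embedZ]; rfl⟩


lemma nbhd3 {x : W3} {z : V3} (h0 : |x 0 - (z 0 : ℝ)| < 1) (h1 : |x 1 - (z 1 : ℝ)| < 1)
    (h2 : |x 2 - (z 2 : ℝ)| < 1) : z ∈ IntNbhd x := by
  intro i; fin_cases i <;> assumption

lemma witP1 {x : W3} (hx : x ∈ P1) : Wit (D1 ∩ IntNbhd x) x := by
  obtain ⟨s, t, hs0, hs1, ht0, ht1, e0, e1, e2⟩ := hx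
  rcases le_total (s + t) 1 with hst | hst
  · refine witness3 D1 ![0,0,0] ![0,1,1] ![1,1,0] (by decide) (by decide) (by decide)
      (1 - s - t) s t (by linarith) hs0 ht0 (by ring) x ?_ ?_ ?_ ?_
    · intro i; fin_cases i <;> simp <;> linarith [e0, e1, e2]
    · intro h
      have hlt : s + t < 1 := lt_of_le_of_ne hst (fun he => h (by linarith))
      refine ⟨by simp [D1], nbhd3 ?_ ?_ ?_⟩ <;>
        (rw [abs_lt]; constructor <;> (simp [e0, e1, e2]; linarith))
    · intro h
      have hs : 0 < s := lt_of_le_of_ne hs0 (Ne.symm h)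
      refine ⟨by simp [D1], nbhd3 ?_ ?_ ?_⟩ <;>
        (rw [abs_lt]; constructor <;> (simp [e0, e1, e2]; linarith))
    · intro h
      have ht : 0 < t := lt_of_le_of_ne ht0 (Ne.symm h)
      refine ⟨by simp [D1], nbhd3 ?_ ?_ ?_⟩ <;>
        (rw [abs_lt]; constructor <;> (simp [e0, e1, e2]; linarith))
  · refine witness3 D1 ![0,1,1] ![1,1,0] ![1,2,1] (by decide) (by decide) (by decide)
      (1 - t) (1 - s) (s + t - 1) (by linarith) (by linarith) (by linarith) (by ring) x ?_ ?_ ?_ ?_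
    · intro i; fin_cases i <;> simp <;> linarith [e0, e1, e2]
    · intro h
      have hlt : t < 1 := lt_of_le_of_ne ht1 (fun he => h (by linarith))
      refine ⟨by simp [D1], nbhd3 ?_ ?_ ?_⟩ <;>
        (rw [abs_lt]; constructor <;> (simp [e0, e1, e2]; linarith))
    · intro h
      have hlt : s < 1 := lt_of_le_of_ne hs1 (fun he => h (by linarith))
      refine ⟨by simp [D1], nbhd3 ?_ ?_ ?_⟩ <;>
        (rw [abs_lt]; constructor <;> (simp [e0, e1, e2]; linarith))
    · intro h
      have hlt : 1 < s + t := lt_of_le_of_ne hst (fun he => h (by linarith))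
      refine ⟨by simp [D1], nbhd3 ?_ ?_ ?_⟩ <;>
        (rw [abs_lt]; constructor <;> (simp [e0, e1, e2]; linarith))

lemma witP2 {x : W3} (hx : x ∈ P2) : Wit (D2 ∩ IntNbhd x) x := by
  obtain ⟨s, t, hs0, hs1, ht0, ht1, e0, e1, e2⟩ := hx
  rcases le_total (s + t) 1 with hst | hst
  · refine witness3 D2 ![0,0,0] ![0,1,0] ![1,1,1] (by decide) (by decide) (by decide)
      (1 - s - t) s t (by linarith) hs0 ht0 (by ring) x ?_ ?_ ?_ ?_
    · intro i; fin_cases i <;> simp <;> linarith [e0, e1, e2]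
    · intro h
      have hlt : s + t < 1 := lt_of_le_of_ne hst (fun he => h (by linarith))
      refine ⟨by simp [D2], nbhd3 ?_ ?_ ?_⟩ <;>
        (rw [abs_lt]; constructor <;> (simp [e0, e1, e2]; linarith))
    · intro h
      have hs : 0 < s := lt_of_le_of_ne hs0 (Ne.symm h)
      refine ⟨by simp [D2], nbhd3 ?_ ?_ ?_⟩ <;>
        (rw [abs_lt]; constructor <;> (simp [e0, e1, e2]; linarith))
    · intro h
      have ht : 0 < t := lt_of_le_of_ne ht0 (Ne.symm h)
      refine ⟨by simp [D2], nbhd3 ?_ ?_ ?_⟩ <;>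
        (rw [abs_lt]; constructor <;> (simp [e0, e1, e2]; linarith))
  · refine witness3 D2 ![0,1,0] ![1,1,1] ![1,2,1] (by decide) (by decide) (by decide)
      (1 - t) (1 - s) (s + t - 1) (by linarith) (by linarith) (by linarith) (by ring) x ?_ ?_ ?_ ?_
    · intro i; fin_cases i <;> simp <;> linarith [e0, e1, e2]
    · intro h
      have hlt : t < 1 := lt_of_le_of_ne ht1 (fun he => h (by linarith))
      refine ⟨by simp [D2], nbhd3 ?_ ?_ ?_⟩ <;>
        (rw [abs_lt]; constructor <;> (simp [e0, e1, e2]; linarith))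
    · intro h
      have hlt : s < 1 := lt_of_le_of_ne hs1 (fun he => h (by linarith))
      refine ⟨by simp [D2], nbhd3 ?_ ?_ ?_⟩ <;>
        (rw [abs_lt]; constructor <;> (simp [e0, e1, e2]; linarith))
    · intro h
      have hlt : 1 < s + t := lt_of_le_of_ne hst (fun he => h (by linarith))
      refine ⟨by simp [D2], nbhd3 ?_ ?_ ?_⟩ <;>
        (rw [abs_lt]; constructor <;> (simp [e0, e1, e2]; linarith))


lemma icsD1 : IntegrallyConvexSet D1 := fun _ hx => mem_hull_of_wit (witP1 (hullD1_subset hx))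
lemma icsD2 : IntegrallyConvexSet D2 := fun _ hx => mem_hull_of_wit (witP2 (hullD2_subset hx))

lemma icfn_of (f : V3 → EReal) (D : Set V3) (P : Set W3)
    (hin : ∀ z ∈ D, f z = 0) (hout : ∀ z : V3, z ∉ D → f z = ⊤)
    (hPconv : Convex ℝ P)
    (hwit : ∀ x ∈ P, Wit (D ∩ IntNbhd x) x)
    (hhull : convexHull ℝ (embedZ '' D) ⊆ P) :
    IntegrallyConvexFn f := by
  classical
  have hpos : ∀ z, 0 ≤ f z := by
    intro z
    by_cases hz : z ∈ D
    · rw [hin z hz]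
    · rw [hout z hz]; exact le_top
  have hle : ∀ x ∈ P, LocalConvexExt f x ≤ 0 := fun x hx =>
    lce_le_zero f (fun z hz => hin z hz.1) (hwit x hx)
  have hPfin : ∀ x : W3, LocalConvexExt f x ≠ ⊤ → x ∈ P := by
    intro x hx
    obtain ⟨A, lam, hN, h0, h1, hxc, hsupp⟩ := rep_of_lce_lt_top f hpos hx
    exact hhull (mem_hull_of_wit (wit_of_rep A lam hN h0 h1 hxc
      (fun z hz hl => by_contra fun hD => hsupp z hz hl (hout z hD))))
  intro x y a b ha hb hab
  rcases eq_or_lt_of_le ha with ha0 | ha'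
  · have hb1 : b = 1 := by linarith
    rw [← ha0, hb1]
    simp
  rcases eq_or_lt_of_le hb with hb0 | hb'
  · have ha1 : a = 1 := by linarith
    rw [← hb0, ha1]
    simp
  by_cases hx : LocalConvexExt f x = ⊤
  · rw [hx, EReal.mul_top_of_pos (EReal.coe_pos.2 ha'), EReal.top_add_of_ne_bot
      ((lt_of_lt_of_le (show (⊥:EReal) < 0 by norm_num)
        (mul_nonneg (by exact_mod_cast hb) (lce_nonneg f hpos y))).ne')]
    exact le_top
  by_cases hy : LocalConvexExt f y = ⊤
  · rw [hy, EReal.mul_top_of_pos (EReal.coe_pos.2 hb'), EReal.add_top_of_ne_bot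
      ((lt_of_lt_of_le (show (⊥:EReal) < 0 by norm_num)
        (mul_nonneg (by exact_mod_cast ha) (lce_nonneg f hpos x))).ne')]
    exact le_top
  have hx0 : LocalConvexExt f x = 0 :=
    le_antisymm (hle x (hPfin x hx)) (lce_nonneg f hpos x)
  have hy0 : LocalConvexExt f y = 0 :=
    le_antisymm (hle y (hPfin y hy)) (lce_nonneg f hpos y)
  rw [hx0, hy0, mul_zero, mul_zero, add_zero]
  exact hle _ (hPconv (hPfin x hx) (hPfin y hy) ha hb hab)

lemma interD : D1 ∩ D2 = ({![0,0,0], ![1,2,1]} : Set V3) := by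
  ext z
  simp only [D1, D2, Set.mem_inter_iff, Set.mem_insert_iff, Set.mem_singleton_iff]
  constructor
  · rintro ⟨(rfl | rfl | rfl | rfl), (h | h | h | h)⟩ <;>
      first
        | (left; rfl)
        | (right; rfl)
        | (exact absurd h (by decide))
  · rintro (rfl | rfl)
    · exact ⟨Or.inl rfl, Or.inl rfl⟩
    · exact ⟨Or.inr (Or.inr (Or.inr rfl)), Or.inr (Or.inr (Or.inr rfl))⟩

lemma not_ics_inter : ¬ IntegrallyConvexSet (D1 ∩ D2) := by
  rw [interD]
  intro hICS
  set m : W3 := ![1/2, 1, 1/2] with hm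
  have hmem : m ∈ convexHull ℝ (embedZ '' ({![0,0,0], ![1,2,1]} : Set V3)) := by
    have ha : embedZ (![0,0,0] : V3) ∈ embedZ '' ({![0,0,0], ![1,2,1]} : Set V3) :=
      ⟨![0,0,0], Set.mem_insert _ _, rfl⟩
    have hb : embedZ (![1,2,1] : V3) ∈ embedZ '' ({![0,0,0], ![1,2,1]} : Set V3) :=
      ⟨![1,2,1], Set.mem_insert_of_mem _ rfl, rfl⟩
    apply segment_subset_convexHull ha hb
    refine ⟨1/2, 1/2, by norm_num, by norm_num, by norm_num, ?_⟩
    funext i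
    fin_cases i <;> norm_num [embedZ, hm]
  have h2 := hICS m hmem
  have hempty : ({![0,0,0], ![1,2,1]} : Set V3) ∩ IntNbhd m = ∅ := by
    ext z
    simp only [Set.mem_inter_iff, Set.mem_insert_iff, Set.mem_singleton_iff,
      Set.mem_empty_iff_false, iff_false, not_and]
    rintro (rfl | rfl) hN
    · have := hN 1; norm_num [hm] at this
    · have := hN 1; norm_num [hm] at this
  rw [hempty] at h2
  simp at h2

lemma lce_le_of_point (f : V3 → EReal) (p : V3) (hfp : f p = 0) :
    LocalConvexExt f (embedZ p) ≤ 0 := by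
  classical
  refine sInf_le ⟨{p}, fun z => if z = p then 1 else 0, ?_, ?_, ?_, ?_, ?_⟩
  · intro z hz
    rw [Finset.mem_singleton] at hz; subst hz
    intro i; simp [embedZ]
  · intro z hz; rw [Finset.mem_singleton] at hz; subst hz; simp
  · simp
  · intro i; simp [embedZ]
  · simp [hfp]

lemma not_icfn_sum (δ1 δ2 : V3 → EReal)
    (h1in : ∀ x ∈ D1, δ1 x = 0) (h1out : ∀ x : V3, x ∉ D1 → δ1 x = ⊤)
    (h2in : ∀ x ∈ D2, δ2 x = 0) (h2out : ∀ x : V3, x ∉ D2 → δ2 x = ⊤) :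
    ¬ IntegrallyConvexFn (fun x => δ1 x + δ2 x) := by
  classical
  set g : V3 → EReal := fun z => δ1 z + δ2 z with hg
  have hp1 : ∀ z, 0 ≤ δ1 z := by
    intro z; by_cases h : z ∈ D1
    · rw [h1in z h]
    · rw [h1out z h]; exact le_top
  have hp2 : ∀ z, 0 ≤ δ2 z := by
    intro z; by_cases h : z ∈ D2
    · rw [h2in z h]
    · rw [h2out z h]; exact le_top
  have hgpos : ∀ z, 0 ≤ g z := fun z => add_nonneg (hp1 z) (hp2 z)
  have hgtop : ∀ z : V3, z 1 = 1 → g z = ⊤ := by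
    intro z hz1
    have hnotin : z ∉ D1 ∩ D2 := by
      rw [interD]
      rintro (rfl | rfl) <;> exact absurd hz1 (by decide)
    rw [Set.mem_inter_iff] at hnotin
    rcases not_and_or.1 hnotin with h | h
    · show δ1 z + δ2 z = ⊤
      rw [h1out z h]
      exact EReal.top_add_of_ne_bot
        ((lt_of_lt_of_le (show (⊥:EReal) < 0 by norm_num) (hp2 z)).ne')
    · show δ1 z + δ2 z = ⊤
      rw [h2out z h]
      exact EReal.add_top_of_ne_bot
        ((lt_of_lt_of_le (show (⊥:EReal) < 0 by norm_num) (hp1 z)).ne')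
  intro hIC
  have hx0 : LocalConvexExt g (embedZ ![0,0,0]) = 0 :=
    le_antisymm
      (lce_le_of_point g _ (by
        show δ1 _ + δ2 _ = 0
        rw [h1in _ (Set.mem_insert _ _), h2in _ (Set.mem_insert _ _), add_zero]))
      (lce_nonneg g hgpos _)
  have hy0 : LocalConvexExt g (embedZ ![1,2,1]) = 0 :=
    le_antisymm
      (lce_le_of_point g _ (by
        show δ1 _ + δ2 _ = 0
        rw [h1in _ (by simp [D1]), h2in _ (by simp [D2]), add_zero]))
      (lce_nonneg g hgpos _)
  have hkey := hIC (embedZ ![0,0,0]) (embedZ ![1,2,1]) (1/2) (1/2)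
    (by norm_num) (by norm_num) (by norm_num)
  rw [hx0, hy0] at hkey
  simp only [mul_zero, add_zero] at hkey
  have htop : LocalConvexExt g
      ((1/2 : ℝ) • embedZ ![0,0,0] + (1/2 : ℝ) • embedZ ![1,2,1]) = ⊤ := by
    rw [LocalConvexExt, sInf_eq_top]
    rintro v ⟨A, lam, hN, h0, h1, hxc, rfl⟩
    have hex : ∃ z ∈ A, lam z ≠ 0 := by
      by_contra hno
      push_neg at hno
      rw [Finset.sum_eq_zero hno] at h1
      norm_num at h1
    obtain ⟨z, hzA, hlz⟩ := hex
    have hz1 : z 1 = 1 := by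
      have hthis := hN z hzA 1
      simp only [Pi.add_apply, Pi.smul_apply, smul_eq_mul, embedZ] at hthis
      norm_num at hthis
      rw [abs_lt] at hthis
      obtain ⟨hl, hr⟩ := hthis
      have h1' : (0:ℝ) < (z 1 : ℝ) := by linarith
      have h2' : ((z 1 : ℤ) : ℝ) < 2 := by linarith
      have : (0:ℤ) < z 1 := by exact_mod_cast h1'
      have : z 1 < 2 := by exact_mod_cast h2'
      omega
    have hgz : g z = ⊤ := hgtop z hz1
    have hterm : ((lam z : EReal) * g z) = ⊤ := by
      rw [hgz]
      exact EReal.mul_top_of_pos (EReal.coe_pos.2 (lt_of_le_of_ne (h0 z hzA) (Ne.symm hlz)))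
    have hle : ((lam z : EReal) * g z) ≤ ∑ w ∈ A, ((lam w : EReal) * g w) :=
      Finset.single_le_sum (f := fun w => ((lam w : EReal) * g w))
        (fun w hw => mul_nonneg (by exact_mod_cast h0 w hw) (hgpos w)) hzA
    rw [hterm, top_le_iff] at hle
    exact hle
  rw [htop] at hkey
  simp at hkey

end ICAux

/-- `D₁` and `D₂` are integrally convex but their intersection is
not; correspondingly the sum of their indicator functions is a sum of two
integrally convex functions that is not integrally convex. -/
theorem sum_of_indicators_not_integrally_convex
    (δ1 δ2 : (Fin 3 → ℤ) → EReal)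
    (h1in : ∀ x ∈ ({![0,0,0], ![0,1,1], ![1,1,0], ![1,2,1]} : Set (Fin 3 → ℤ)), δ1 x = 0)
    (h1out : ∀ x : Fin 3 → ℤ,
      x ∉ ({![0,0,0], ![0,1,1], ![1,1,0], ![1,2,1]} : Set (Fin 3 → ℤ)) → δ1 x = ⊤)
    (h2in : ∀ x ∈ ({![0,0,0], ![0,1,0], ![1,1,1], ![1,2,1]} : Set (Fin 3 → ℤ)), δ2 x = 0)
    (h2out : ∀ x : Fin 3 → ℤ,
      x ∉ ({![0,0,0], ![0,1,0], ![1,1,1], ![1,2,1]} : Set (Fin 3 → ℤ)) → δ2 x = ⊤) :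
    IntegrallyConvexSet ({![0,0,0], ![0,1,1], ![1,1,0], ![1,2,1]} : Set (Fin 3 → ℤ)) ∧
    IntegrallyConvexSet ({![0,0,0], ![0,1,0], ![1,1,1], ![1,2,1]} : Set (Fin 3 → ℤ)) ∧
    ({![0,0,0], ![0,1,1], ![1,1,0], ![1,2,1]} : Set (Fin 3 → ℤ)) ∩
        ({![0,0,0], ![0,1,0], ![1,1,1], ![1,2,1]} : Set (Fin 3 → ℤ)) =
      ({![0,0,0], ![1,2,1]} : Set (Fin 3 → ℤ)) ∧
    ¬ IntegrallyConvexSet (({![0,0,0], ![0,1,1], ![1,1,0], ![1,2,1]} : Set (Fin 3 → ℤ)) ∩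
        ({![0,0,0], ![0,1,0], ![1,1,1], ![1,2,1]} : Set (Fin 3 → ℤ))) ∧
    IntegrallyConvexFn δ1 ∧ IntegrallyConvexFn δ2 ∧
    ¬ IntegrallyConvexFn (fun x => δ1 x + δ2 x) := by
  exact ⟨ICAux.icsD1, ICAux.icsD2, ICAux.interD, ICAux.not_ics_inter,
    ICAux.icfn_of δ1 ICAux.D1 ICAux.P1 h1in h1out ICAux.convex_P1
      (fun x hx => ICAux.witP1 hx) ICAux.hullD1_subset,
    ICAux.icfn_of δ2 ICAux.D2 ICAux.P2 h2in h2out ICAux.convex_P2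
      (fun x hx => ICAux.witP2 hx) ICAux.hullD2_subset,
    ICAux.not_icfn_sum δ1 δ2 h1in h1out h2in h2out⟩
end
end
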